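/- arXiv:2007.06519 — 2 statements merged into one kernel-verified Lean document; each statement's English description precedes it below -/
import Mathlib

section
/- Let V be a finite-dimensional real inner-product-like space with a symmetric bilinear form ⟨·,·⟩, and let C_1,…,C_n be vectors with ⟨C_i,C_j⟩ ≥ 0 for all i ≠ j. Suppose D = F + E = A + B where E is a nonnegative combination of the C_i, B is a nonzero nonnegative combination of the C_i whose Gram matrix restricted to the support of B is negative definite, ⟨F, C_i⟩ ≥ 0 for every C_i in the support of B, and ⟨A, C_i⟩ ≤ 0 for every C_i in the support of B. Then B ≤ E coefficientwise (each coefficient of C_i in B is at most the corresponding coefficient in E). -/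
/-- **Comparison lemma for Zariski decompositions** (Enokizono, Lemma 3.4),
stated for a symmetric bilinear form on a finite-dimensional real vector space.
If `D = F + E = A + B`, `E` is a nonnegative combination of the `C i`,
`B` is a nonzero nonnegative combination whose Gram matrix on its support is
negative definite, `F` pairs nonnegatively and `A` nonpositively with every
`C i` in the support of `B`, then `B ≤ E` coefficientwise. -/
theorem integral_zariski_comparison
    {V : Type*} [AddCommGroup V] [Module ℝ V] [FiniteDimensional ℝ V]
    (f : V →ₗ[ℝ] V →ₗ[ℝ] ℝ) (hsymm : ∀ v w : V, f v w = f w v)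
    {n : ℕ} (C : Fin n → V)
    (hC : ∀ i j, i ≠ j → 0 ≤ f (C i) (C j))
    (D F A : V) (e b : Fin n → ℝ)
    (he : ∀ i, 0 ≤ e i) (hb : ∀ i, 0 ≤ b i) (hbne : b ≠ 0)
    (hDFE : D = F + ∑ i, e i • C i)
    (hDAB : D = A + ∑ i, b i • C i)
    (hnegdef : ∀ x : Fin n → ℝ, x ≠ 0 → (∀ i, b i = 0 → x i = 0) →
      f (∑ i, x i • C i) (∑ i, x i • C i) < 0)
    (hF : ∀ i, b i ≠ 0 → 0 ≤ f F (C i))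
    (hA : ∀ i, b i ≠ 0 → f A (C i) ≤ 0) :
    ∀ i, b i ≤ e i := by
  by_contra h
  push_neg at h
  obtain ⟨i0, hi0⟩ := h
  set y : Fin n → ℝ := fun i => max (b i - e i) 0 with hy
  set z : Fin n → ℝ := fun i => max (e i - b i) 0 with hz
  have hy0 : ∀ i, 0 ≤ y i := fun i => le_max_right _ _
  have hz0 : ∀ i, 0 ≤ z i := fun i => le_max_right _ _
  have hyz : ∀ i, y i - z i = b i - e i := by
    intro i
    simp only [hy, hz]
    rcases le_total (b i) (e i) with hle | hle
    · rw [max_eq_right (by linarith), max_eq_left (by linarith)]; ring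
    · rw [max_eq_left (by linarith), max_eq_right (by linarith)]; ring
  have hsupp : ∀ i, b i = 0 → y i = 0 := by
    intro i hbi
    simp only [hy]
    exact max_eq_right (by have := he i; linarith)
  have hyne : y ≠ 0 := by
    intro hcon
    have : y i0 = 0 := congrFun hcon i0
    simp only [hy] at this
    have : b i0 - e i0 ≤ 0 := by
      by_contra hc
      push_neg at hc
      rw [max_eq_left (le_of_lt hc)] at this
      linarith
    linarith
  -- vector identity: ∑ y C = ∑ z C + (F - A)
  have hvec : (∑ i, y i • C i) = (∑ i, z i • C i) + (F - A) := by
    have hBE : (∑ i, b i • C i) - (∑ i, e i • C i) = F - A := by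
      rw [sub_eq_sub_iff_add_eq_add]
      have h1 := hDFE.symm.trans hDAB
      rw [h1]; abel
    have : (∑ i, y i • C i) - (∑ i, z i • C i) = F - A := by
      rw [← hBE, ← Finset.sum_sub_distrib, ← Finset.sum_sub_distrib]
      apply Finset.sum_congr rfl
      intro i _
      rw [← sub_smul, ← sub_smul, hyz]
    rw [← this]; abel
  set S := ∑ i, y i • C i with hS
  have hexpand : ∀ w : V, f S w = ∑ i, y i * f (C i) w := by
    intro w
    simp only [hS, map_sum, LinearMap.map_smul, LinearMap.sum_apply,
      LinearMap.smul_apply, smul_eq_mul]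
  have hSz : 0 ≤ f S (∑ j, z j • C j) := by
    rw [hexpand]
    apply Finset.sum_nonneg
    intro i _
    rcases eq_or_lt_of_le (hy0 i) with hyi | hyi
    · rw [← hyi]; simp
    · have hzi : z i = 0 := by
        simp only [hz]
        apply max_eq_right
        have hy' : 0 < max (b i - e i) 0 := hyi
        rcases le_total (b i - e i) 0 with hle | hle
        · rw [max_eq_right hle] at hy'; linarith
        · linarith
      apply mul_nonneg (le_of_lt hyi)
      simp only [map_sum, LinearMap.map_smul, smul_eq_mul]
      apply Finset.sum_nonneg
      intro j _
      rcases eq_or_ne i j with rfl | hij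
      · rw [hzi]; simp
      · exact mul_nonneg (hz0 j) (hC i j hij)
  have hSF : 0 ≤ f S F := by
    rw [hexpand]
    apply Finset.sum_nonneg
    intro i _
    rcases eq_or_lt_of_le (hy0 i) with hyi | hyi
    · rw [← hyi]; simp
    · have hbi : b i ≠ 0 := by
        intro hbi; rw [hsupp i hbi] at hyi; exact lt_irrefl _ hyi
      have := hF i hbi
      rw [hsymm (C i) F]
      exact mul_nonneg (le_of_lt hyi) this
  have hSA : f S A ≤ 0 := by
    rw [hexpand]
    apply Finset.sum_nonpos
    intro i _
    rcases eq_or_lt_of_le (hy0 i) with hyi | hyi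
    · rw [← hyi]; simp
    · have hbi : b i ≠ 0 := by
        intro hbi; rw [hsupp i hbi] at hyi; exact lt_irrefl _ hyi
      have := hA i hbi
      rw [hsymm (C i) A]
      exact mul_nonpos_of_nonneg_of_nonpos (le_of_lt hyi) this
  have hSS : 0 ≤ f S S := by
    calc (0:ℝ) ≤ f S (∑ j, z j • C j) + (f S F - f S A) := by linarith
    _ = f S ((∑ j, z j • C j) + (F - A)) := by
        rw [map_add, map_sub]
    _ = f S S := by rw [← hvec]
  have := hnegdef y hyne hsupp
  rw [← hS] at this
  linarith
end

section
/- Let X be a normal complete surface (algebraic over a field, with Mumford intersection theory) such that the cone of numerically ample classes is nonempty, and let D be a nef and big ℝ-divisor and B an effective divisor with 0 < (D−B)·B and D−2B big. If B² > 0, then B² < (D−B)² and B²·(D−B)² ≤ ((D−B)·B)² by the Hodge index theorem; consequently, if (D−B)·B ≤ δ/4 for some δ > 0, then D² ≤ δ²/(16B²) + δ/2 + B². -/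
/-- **Hodge-index computation in Reider-type theorem II** (Enokizono,
Theorem 5.3): in the numerical class space of a normal complete surface with
nonempty ample cone (so the intersection form has signature `(1, ρ-1)` and
satisfies the Hodge index inequality, and a nef-and-big class pairs
positively with any big class), let `D` be a nef and big ℝ-divisor and `B`
an effective divisor with `0 < (D-B)·B` and `D - 2B` big.  If `B² > 0`, then
`B² < (D-B)²` and `B²·(D-B)² ≤ ((D-B)·B)²`; consequently, if
`(D-B)·B ≤ δ/4` for some `δ > 0`, then `D² ≤ δ²/(16 B²) + δ/2 + B²`. -/
theorem hodge_index_reider_estimate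
    {V : Type*} [AddCommGroup V] [Module ℝ V]
    (inter : V →ₗ[ℝ] V →ₗ[ℝ] ℝ)
    (hsymm : ∀ x y : V, inter x y = inter y x)
    (Nef Big Eff : V → Prop)
    (hodge : ∀ x y : V, 0 < inter x x →
      inter x x * inter y y ≤ (inter x y) ^ 2)
    (nef_big_pos : ∀ x y : V, Nef x → Big x → Big y → 0 < inter x y)
    (D B : V) (hDnef : Nef D) (hDbig : Big D) (hBeff : Eff B)
    (hDB : 0 < inter (D - B) B) (h2B : Big (D - (2 : ℝ) • B))
    (hB2 : 0 < inter B B) :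
    inter B B < inter (D - B) (D - B) ∧
    inter B B * inter (D - B) (D - B) ≤ (inter (D - B) B) ^ 2 ∧
    ∀ δ : ℝ, 0 < δ → inter (D - B) B ≤ δ / 4 →
      inter D D ≤ δ ^ 2 / (16 * inter B B) + δ / 2 + inter B B := by
  have hpos := nef_big_pos D (D - (2:ℝ) • B) hDnef hDbig h2B
  set a := inter D D with ha
  set b := inter D B with hb
  set c := inter B B with hc
  have hBD : inter B D = b := hsymm B D
  have hpos' : 0 < a - 2 * b := by
    have h := hpos
    simp [map_sub, map_smul, ← ha, ← hb] at h
    linarith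
  have hDBval : inter (D - B) B = b - c := by
    simp [map_sub, ← hb, ← hc, hsymm B D]
  have hDD : inter (D - B) (D - B) = a - 2 * b + c := by
    simp [map_sub, ← ha, ← hb, ← hc, hBD]; ring
  have hDBc : 0 < b - c := hDBval ▸ hDB
  refine ⟨by rw [hDD]; linarith, ?_, ?_⟩
  · have := hodge B (D - B) hB2
    rw [hsymm B (D - B)] at this
    exact this
  · intro δ hδ hδ4
    have hh := hodge B (D - B) hB2
    rw [hsymm B (D - B), hDBval, hDD] at hh
    rw [hDBval] at hδ4
    have h1 : a - 2 * b + c ≤ (b - c) ^ 2 / c := by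
      rw [le_div_iff₀ hB2]; linarith [hh]
    have h2 : (b - c) ^ 2 ≤ (δ / 4) ^ 2 := by
      apply sq_le_sq' <;> nlinarith
    have h3 : (b - c) ^ 2 / c ≤ δ ^ 2 / (16 * c) := by
      rw [div_le_div_iff₀ hB2 (by positivity)]; nlinarith
    linarith [h1, h3]
end
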